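/- Let ℓ ≥ 1 be an integer and let Q = {i_1, …, i_m} be a level subset of {1, …, ℓ}. Then the maximum of val(Q, y) over all feasible vectors y equals max_{1 ≤ m' ≤ m} (Σ_{k=1}^{m'} (i_{k+1} − 1)) / i_{m'}. -/
import Mathlib

/-- A vector `y` (indexed `1, …, ℓ`) is feasible if it is nonincreasing, nonnegative,
and sums to 1. -/
def Feasible (ℓ : ℕ) (y : ℕ → ℝ) : Prop :=
  (∀ i ∈ Finset.Icc 1 ℓ, ∀ j ∈ Finset.Icc 1 ℓ, i ≤ j → y j ≤ y i) ∧
  (∀ i ∈ Finset.Icc 1 ℓ, 0 ≤ y i) ∧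
  (∑ i ∈ Finset.Icc 1 ℓ, y i = 1)

/-- `Q` is a level subset of `{1, …, ℓ}` if `Q ⊆ {1, …, ℓ}` and `1 ∈ Q`. -/
def IsLevelSubset (ℓ : ℕ) (Q : Finset ℕ) : Prop :=
  Q ⊆ Finset.Icc 1 ℓ ∧ 1 ∈ Q

/-- The successor of `i` in the level subset `Q`: the smallest element of `Q` larger
than `i`, with the convention that it is `ℓ + 1` if there is none. -/
def nextLevel (ℓ : ℕ) (Q : Finset ℕ) (i : ℕ) : ℕ :=
  if h : (Q.filter (fun j => i < j)).Nonempty then (Q.filter (fun j => i < j)).min' h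
  else ℓ + 1

/-- `val(Q, y) = Σ_{k=1}^m (i_{k+1} − 1)·y_{i_k}`. -/
def lval (ℓ : ℕ) (Q : Finset ℕ) (y : ℕ → ℝ) : ℝ :=
  ∑ i ∈ Q, ((nextLevel ℓ Q i : ℝ) - 1) * y i

lemma tele_aux (g : ℕ → ℝ) : ∀ a b : ℕ, a ≤ b + 1 →
    ∑ q ∈ Finset.Icc a b, (g q - g (q+1)) = g a - g (b+1) := by
  intro a b
  induction b with
  | zero => intro h; interval_cases a <;> simp
  | succ n ih =>
    intro h
    rcases Nat.lt_or_ge a (n+2) with h1 | h1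
    · rw [Finset.sum_Icc_succ_top (by omega : a ≤ n+1), ih (by omega)]; ring
    · have : a = n + 2 := by omega
      subst this
      rw [Finset.Icc_eq_empty (by omega)]
      simp

lemma nextLevel_gt_aux (ℓ : ℕ) (Q : Finset ℕ) (hQ : Q ⊆ Finset.Icc 1 ℓ) {i : ℕ}
    (hi : i ∈ Q) : i < nextLevel ℓ Q i := by
  unfold nextLevel
  split
  · next h =>
      have := (Q.filter (fun j => i < j)).min'_mem h
      exact (Finset.mem_filter.mp this).2
  · have := Finset.mem_Icc.mp (hQ hi); omega

lemma S_nonneg_aux (ℓ : ℕ) (Q : Finset ℕ) (hQ : Q ⊆ Finset.Icc 1 ℓ) (q : ℕ) :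
    0 ≤ ∑ i ∈ Q.filter (fun i => i ≤ q), ((nextLevel ℓ Q i : ℝ) - 1) := by
  refine Finset.sum_nonneg fun i hi => ?_
  have hiQ : i ∈ Q := (Finset.mem_filter.mp hi).1
  have h1 : 1 ≤ i := (Finset.mem_Icc.mp (hQ hiQ)).1
  have h2 : i < nextLevel ℓ Q i := nextLevel_gt_aux ℓ Q hQ hiQ
  have : (1 : ℝ) ≤ (nextLevel ℓ Q i : ℝ) := by exact_mod_cast by omega
  linarith

/-- The maximum of `val(Q, y)` over all feasible `y` equals
`max_{1 ≤ m' ≤ m} (Σ_{k=1}^{m'} (i_{k+1} − 1)) / i_{m'}`. -/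
theorem stmt_7 (ℓ : ℕ) (hℓ : 1 ≤ ℓ) (Q : Finset ℕ) (hQ : IsLevelSubset ℓ Q) :
    IsGreatest {v : ℝ | ∃ y : ℕ → ℝ, Feasible ℓ y ∧ v = lval ℓ Q y}
      (Q.sup' ⟨1, hQ.2⟩ fun q =>
        (∑ i ∈ Q.filter (fun i => i ≤ q), ((nextLevel ℓ Q i : ℝ) - 1)) / (q : ℝ)) := by
  obtain ⟨hQsub, hQ1⟩ := hQ
  set f : ℕ → ℝ := fun q =>
    (∑ i ∈ Q.filter (fun i => i ≤ q), ((nextLevel ℓ Q i : ℝ) - 1)) / (q : ℝ) with hf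
  set M : ℝ := Q.sup' ⟨1, hQ1⟩ f with hM
  constructor
  · -- membership: achieved by the uniform vector on [1, q*]
    obtain ⟨qs, hqsQ, hEq⟩ := Finset.exists_mem_eq_sup' ⟨1, hQ1⟩ f
    have hqs1 : 1 ≤ qs := (Finset.mem_Icc.mp (hQsub hqsQ)).1
    have hqsℓ : qs ≤ ℓ := (Finset.mem_Icc.mp (hQsub hqsQ)).2
    have hqspos : (0 : ℝ) < (qs : ℝ) := by exact_mod_cast hqs1
    refine ⟨fun i => if i ≤ qs then 1 / (qs : ℝ) else 0, ⟨?_, ?_, ?_⟩, ?_⟩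
    · intro i _ j _ hij
      dsimp only
      by_cases hj : j ≤ qs
      · rw [if_pos hj, if_pos (le_trans hij hj)]
      · rw [if_neg hj]
        split <;> positivity
    · intro i _
      dsimp only
      split <;> positivity
    · have hfil : (Finset.Icc 1 ℓ).filter (fun i => i ≤ qs) = Finset.Icc 1 qs := by
        ext x; simp only [Finset.mem_filter, Finset.mem_Icc]; omega
      rw [← Finset.sum_filter, hfil, Finset.sum_const, Nat.card_Icc]
      simp only [Nat.add_sub_cancel, nsmul_eq_mul]
      field_simp
    · rw [hM, hEq, hf]
      unfold lval
      simp_rw [mul_ite, mul_zero, ← Finset.sum_filter, ← Finset.sum_mul]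
      rw [div_eq_mul_inv, one_div]
  · -- upper bound
    rintro v ⟨y, ⟨hmono, hpos, hsum⟩, hv⟩
    set yb : ℕ → ℝ := fun q => if q ≤ ℓ then y q else 0 with hyb
    have hybℓ : yb (ℓ + 1) = 0 := by rw [hyb]; simp
    have hybeq : ∀ q ∈ Finset.Icc 1 ℓ, yb q = y q := by
      intro q hq; rw [hyb]; simp [(Finset.mem_Icc.mp hq).2]
    set S : ℕ → ℝ := fun q => ∑ i ∈ Q.filter (fun i => i ≤ q), ((nextLevel ℓ Q i : ℝ) - 1)
      with hS
    -- key1 : Abel summation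
    have key1 : ∑ q ∈ Finset.Icc 1 ℓ, (yb q - yb (q+1)) * S q = lval ℓ Q y := by
      rw [hS]
      calc ∑ q ∈ Finset.Icc 1 ℓ, (yb q - yb (q+1)) *
            ∑ i ∈ Q.filter (fun i => i ≤ q), ((nextLevel ℓ Q i : ℝ) - 1)
          = ∑ q ∈ Finset.Icc 1 ℓ, ∑ i ∈ Q,
              if i ≤ q then (yb q - yb (q+1)) * ((nextLevel ℓ Q i : ℝ) - 1) else 0 := by
            refine Finset.sum_congr rfl fun q _ => ?_
            rw [Finset.mul_sum, Finset.sum_filter]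
        _ = ∑ i ∈ Q, ∑ q ∈ Finset.Icc 1 ℓ,
              if i ≤ q then (yb q - yb (q+1)) * ((nextLevel ℓ Q i : ℝ) - 1) else 0 :=
            Finset.sum_comm
        _ = ∑ i ∈ Q, ((nextLevel ℓ Q i : ℝ) - 1) * y i := by
            refine Finset.sum_congr rfl fun i hi => ?_
            have hi1 : 1 ≤ i := (Finset.mem_Icc.mp (hQsub hi)).1
            have hiℓ : i ≤ ℓ := (Finset.mem_Icc.mp (hQsub hi)).2
            rw [← Finset.sum_filter]
            have hfe : (Finset.Icc 1 ℓ).filter (fun q => i ≤ q) = Finset.Icc i ℓ := by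
              ext x; simp only [Finset.mem_filter, Finset.mem_Icc]; omega
            rw [hfe, ← Finset.sum_mul, tele_aux yb i ℓ (by omega), hybℓ,
              hybeq i (Finset.mem_Icc.mpr ⟨hi1, hiℓ⟩)]
            ring
        _ = lval ℓ Q y := rfl
    -- key2 : total mass
    have key2 : ∑ q ∈ Finset.Icc 1 ℓ, (q : ℝ) * (yb q - yb (q+1)) = 1 := by
      have hsumyb : ∑ q ∈ Finset.Icc 1 ℓ, yb q = 1 := by
        rw [← hsum]; exact Finset.sum_congr rfl hybeq
      have step : ∀ q : ℕ, (q : ℝ) * (yb q - yb (q+1)) =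
          yb q + (((q : ℝ) - 1) * yb q - (((q+1 : ℕ) : ℝ) - 1) * yb (q+1)) := by
        intro q; push_cast; ring
      have hg : ∑ q ∈ Finset.Icc 1 ℓ,
            ((((q : ℕ) : ℝ) - 1) * yb q - (((q+1 : ℕ) : ℝ) - 1) * yb (q+1)) =
            (((1 : ℕ) : ℝ) - 1) * yb 1 - (((ℓ+1 : ℕ) : ℝ) - 1) * yb (ℓ+1) :=
        tele_aux (fun q : ℕ => ((q : ℝ) - 1) * yb q) 1 ℓ (by omega)
      calc ∑ q ∈ Finset.Icc 1 ℓ, (q : ℝ) * (yb q - yb (q+1))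
          = ∑ q ∈ Finset.Icc 1 ℓ, (yb q +
              (((q : ℝ) - 1) * yb q - (((q+1 : ℕ) : ℝ) - 1) * yb (q+1))) :=
            Finset.sum_congr rfl fun q _ => step q
        _ = (∑ q ∈ Finset.Icc 1 ℓ, yb q) +
              ∑ q ∈ Finset.Icc 1 ℓ,
                (((q : ℝ) - 1) * yb q - (((q+1 : ℕ) : ℝ) - 1) * yb (q+1)) := by
            rw [Finset.sum_add_distrib]
        _ = 1 := by
            rw [hsumyb, hg, hybℓ]
            norm_num
    -- per-term bound : S q ≤ q * M
    have keyS : ∀ q ∈ Finset.Icc 1 ℓ, S q ≤ (q : ℝ) * M := by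
      intro q hq
      obtain ⟨hq1, hqℓ⟩ := Finset.mem_Icc.mp hq
      have hne : (Q.filter (fun i => i ≤ q)).Nonempty :=
        ⟨1, Finset.mem_filter.mpr ⟨hQ1, hq1⟩⟩
      set q' := (Q.filter (fun i => i ≤ q)).max' hne with hq'
      have hq'mem := (Q.filter (fun i => i ≤ q)).max'_mem hne
      have hq'Q : q' ∈ Q := (Finset.mem_filter.mp hq'mem).1
      have hq'le : q' ≤ q := (Finset.mem_filter.mp hq'mem).2
      have hq'1 : 1 ≤ q' := (Finset.mem_Icc.mp (hQsub hq'Q)).1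
      have hq'pos : (0 : ℝ) < (q' : ℝ) := by exact_mod_cast hq'1
      have hfeq : Q.filter (fun i => i ≤ q) = Q.filter (fun i => i ≤ q') := by
        ext x
        constructor
        · intro hx
          rcases Finset.mem_filter.mp hx with ⟨hxQ, hxq⟩
          exact Finset.mem_filter.mpr ⟨hxQ, Finset.le_max' _ x hx⟩
        · intro hx
          rcases Finset.mem_filter.mp hx with ⟨hxQ, hxq'⟩
          exact Finset.mem_filter.mpr ⟨hxQ, le_trans hxq' hq'le⟩
      have hSq : S q = S q' := by rw [hS]; simp only; rw [hfeq]
      have hS'nonneg : 0 ≤ S q' := S_nonneg_aux ℓ Q hQsub q'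
      have hMle : S q' / (q' : ℝ) ≤ M := Finset.le_sup' f hq'Q
      have hMnonneg : 0 ≤ M := le_trans (by positivity) hMle
      have h1 : S q' ≤ (q' : ℝ) * M := by
        rw [div_le_iff₀ hq'pos] at hMle
        linarith
      have h2 : (q' : ℝ) * M ≤ (q : ℝ) * M := by
        have : (q' : ℝ) ≤ (q : ℝ) := by exact_mod_cast hq'le
        nlinarith
      rw [hSq]; linarith
    -- monotonicity gives nonneg coefficients
    have keyC : ∀ q ∈ Finset.Icc 1 ℓ, 0 ≤ yb q - yb (q+1) := by
      intro q hq
      obtain ⟨hq1, hqℓ⟩ := Finset.mem_Icc.mp hq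
      rcases Nat.lt_or_ge q ℓ with h | h
      · have := hmono q (Finset.mem_Icc.mpr ⟨hq1, hqℓ⟩) (q+1)
          (Finset.mem_Icc.mpr ⟨by omega, by omega⟩) (by omega)
        have e1 : yb q = y q := hybeq q hq
        have e2 : yb (q+1) = y (q+1) := hybeq (q+1) (Finset.mem_Icc.mpr ⟨by omega, by omega⟩)
        rw [e1, e2]; linarith
      · have hqeq : q = ℓ := by omega
        have e1 : yb q = y q := hybeq q hq
        have e2 : yb (q+1) = 0 := by rw [hyb]; simp [hqeq]
        have := hpos q hq
        rw [e1, e2]; linarith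
    -- combine
    rw [hv, ← key1]
    calc ∑ q ∈ Finset.Icc 1 ℓ, (yb q - yb (q+1)) * S q
        ≤ ∑ q ∈ Finset.Icc 1 ℓ, ((q : ℝ) * (yb q - yb (q+1))) * M := by
          refine Finset.sum_le_sum fun q hq => ?_
          have h1 := keyS q hq
          have h2 := keyC q hq
          have := mul_le_mul_of_nonneg_left h1 h2
          nlinarith [this]
      _ = (∑ q ∈ Finset.Icc 1 ℓ, (q : ℝ) * (yb q - yb (q+1))) * M := by
          rw [Finset.sum_mul]
      _ = M := by rw [key2, one_mul]
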